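/- For m ∈ ℕ let I(m,m;x) be the regularized incomplete beta function with equal parameters. Then ∫₀¹ I(m,m;x)² dx = 1/2 − (2m)!⁴/(4·(4m)!·m!⁴) and ∫₀¹ (d/dx I(m,m;x))² dx = ((2m−2)!² (2m−1)!²)/((4m−3)! (m−1)!⁴). -/

import Mathlib

open intervalIntegral

noncomputable def Gfun (n : ℕ) (x : ℝ) : ℝ := ∫ t in (0:ℝ)..x, t^n * (1-t)^n

lemma contg (n : ℕ) : Continuous (fun t : ℝ => t^n * (1-t)^n) :=
  (continuous_pow n).mul ((continuous_const.sub continuous_id).pow n)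

lemma Gderiv (n : ℕ) (x : ℝ) : HasDerivAt (Gfun n) (x^n * (1-x)^n) x :=
  ((contg n).integral_hasStrictDerivAt 0 x).hasDerivAt

lemma Gcont (n : ℕ) : Continuous (Gfun n) :=
  continuous_iff_continuousAt.mpr fun x => (Gderiv n x).continuousAt

lemma Gzero (n : ℕ) : Gfun n 0 = 0 := by simp [Gfun]


lemma beta_nat (b a : ℕ) :
    ∫ x in (0:ℝ)..1, x^a * (1-x)^b
      = (a.factorial : ℝ) * (b.factorial : ℝ) / ((a+b+1).factorial : ℝ) := by
  induction b generalizing a with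
  | zero =>
    have ha : ((a.factorial : ℝ)) ≠ 0 := Nat.cast_ne_zero.mpr a.factorial_pos.ne'
    simp only [pow_zero, mul_one, integral_pow]
    rw [show a + 0 + 1 = a + 1 by ring, Nat.factorial_succ]
    rw [zero_pow (by omega), one_pow]
    push_cast
    field_simp
    simp
  | succ b ih =>
    have hd : ∀ x : ℝ, HasDerivAt (fun y : ℝ => y^(a+1)*(1-y)^(b+1))
        (((a:ℝ)+1)*x^a*(1-x)^(b+1) - ((b:ℝ)+1)*(x^(a+1)*(1-x)^b)) x := by
      intro x
      have h1 : HasDerivAt (fun y : ℝ => y^(a+1)) (((a:ℝ)+1)*x^a) x := by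
        simpa using hasDerivAt_pow (a+1) x
      have h2 : HasDerivAt (fun y : ℝ => (1-y)^(b+1)) (-(((b:ℝ)+1)*(1-x)^b)) x := by
        have hs : HasDerivAt (fun y : ℝ => 1-y) (-1) x := (hasDerivAt_id x).const_sub 1
        have := (hasDerivAt_pow (b+1) (1-x)).comp x hs
        simpa [Function.comp_def] using this
      have := h1.mul h2
      exact this.congr_deriv (by ring)
    have hint1 : IntervalIntegrable (fun x : ℝ => x^a*(1-x)^(b+1)) MeasureTheory.volume 0 1 :=
      (Continuous.mul (continuous_pow a) ((continuous_const.sub continuous_id).pow (b+1))).intervalIntegrable 0 1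
    have hint2 : IntervalIntegrable (fun x : ℝ => x^(a+1)*(1-x)^b) MeasureTheory.volume 0 1 :=
      (Continuous.mul (continuous_pow (a+1)) ((continuous_const.sub continuous_id).pow b)).intervalIntegrable 0 1
    have h0 : ∫ x in (0:ℝ)..1, (((a:ℝ)+1)*(x^a*(1-x)^(b+1)) - ((b:ℝ)+1)*(x^(a+1)*(1-x)^b)) = 0 := by
      have := integral_eq_sub_of_hasDerivAt (f := fun y : ℝ => y^(a+1)*(1-y)^(b+1))
        (f' := fun x : ℝ => ((a:ℝ)+1)*(x^a*(1-x)^(b+1)) - ((b:ℝ)+1)*(x^(a+1)*(1-x)^b))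
        (a := 0) (b := 1)
        (fun x _ => by simpa [mul_assoc] using hd x)
        (((hint1.const_mul _).sub (hint2.const_mul _)))
      rw [this]
      simp
    rw [integral_sub (hint1.const_mul _) (hint2.const_mul _), integral_const_mul, integral_const_mul, ih] at h0
    have key : ∫ x in (0:ℝ)..1, x^a*(1-x)^(b+1)
        = ((b:ℝ)+1)/((a:ℝ)+1) * (((a+1).factorial : ℝ) * (b.factorial : ℝ) / (((a+1)+b+1).factorial : ℝ)) := by
      have ha1 : ((a:ℝ)+1) ≠ 0 := by positivity
      field_simp at h0 ⊢
      linarith [h0]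
    rw [key]
    rw [show (a+1)+b+1 = (a+b+1)+1 by ring, show a+(b+1)+1 = (a+b+1)+1 by ring,
      Nat.factorial_succ (a+b+1), Nat.factorial_succ a, Nat.factorial_succ b]
    have h1 : ((a+b+1).factorial : ℝ) ≠ 0 := Nat.cast_ne_zero.mpr (Nat.factorial_pos _).ne'
    push_cast
    have ha1 : ((a:ℝ)+1) ≠ 0 := by positivity
    field_simp


lemma G1val (n : ℕ) : Gfun n 1 = (n.factorial : ℝ)^2 / ((2*n+1).factorial : ℝ) := by
  have := beta_nat n n
  rw [show n+n+1 = 2*n+1 by ring] at this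
  rw [Gfun, this]; ring

lemma intG (n : ℕ) : ∫ x in (0:ℝ)..1, Gfun n x = Gfun n 1 / 2 := by
  have hd : ∀ x ∈ Set.uIcc (0:ℝ) 1, HasDerivAt (fun y : ℝ => y * Gfun n y)
      (Gfun n x + x * (x^n*(1-x)^n)) x := by
    intro x _
    have := (hasDerivAt_id x).mul (Gderiv n x)
    exact this.congr_deriv (by simp only [id_eq, one_mul])
  have hint1 : IntervalIntegrable (Gfun n) MeasureTheory.volume 0 1 :=
    (Gcont n).intervalIntegrable 0 1
  have hint2 : IntervalIntegrable (fun x : ℝ => x * (x^n*(1-x)^n)) MeasureTheory.volume 0 1 :=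
    (continuous_id.mul (contg n)).intervalIntegrable 0 1
  have h0 := integral_eq_sub_of_hasDerivAt hd (hint1.add hint2)
  rw [integral_add hint1 hint2] at h0
  simp only [one_mul, Gzero, mul_zero, sub_zero] at h0
  have hxg : ∫ x in (0:ℝ)..1, x * (x^n*(1-x)^n)
      = ((n+1).factorial : ℝ) * (n.factorial : ℝ) / ((2*n+2).factorial : ℝ) := by
    have he : (fun x:ℝ => x * (x^n*(1-x)^n)) = fun x:ℝ => x^(n+1)*(1-x)^n := by
      funext x; ring
    rw [he, beta_nat n (n+1), show (n+1)+n+1 = 2*n+2 by ring]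
  rw [hxg] at h0
  rw [eq_sub_of_add_eq h0, G1val n,
    show 2*n+2 = (2*n+1)+1 by ring, Nat.factorial_succ (2*n+1), Nat.factorial_succ n]
  have h1 : ((2*n+1).factorial : ℝ) ≠ 0 := Nat.cast_ne_zero.mpr (Nat.factorial_pos _).ne'
  have h2 : ((n).factorial : ℝ) ≠ 0 := Nat.cast_ne_zero.mpr (Nat.factorial_pos _).ne'
  have h3 : ((n:ℝ)+1) ≠ 0 := by positivity
  push_cast
  field_simp
  ring

lemma Kval (n : ℕ) : ∫ x in (0:ℝ)..1, Gfun n x * (Gfun n 1 - Gfun n x)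
    = ((2*n+1).factorial : ℝ)^2 / (((n:ℝ)+1) * ((4*n+3).factorial : ℝ)) := by
  set B := Gfun n 1 with hB
  -- continuity facts
  have cg := contg n
  have cG := Gcont n
  have c1 : Continuous (fun x : ℝ => (1-2*x)*(x^n*(1-x)^n)*(B-2*Gfun n x)) :=
    ((continuous_const.sub (continuous_const.mul continuous_id)).mul cg).mul
      (continuous_const.sub (continuous_const.mul cG))
  have c2 : Continuous (fun x : ℝ => x^(2*n+1)*(1-x)^(2*n+1)) :=
    (continuous_pow _).mul ((continuous_const.sub continuous_id).pow _)
  have i1 := c1.intervalIntegrable (μ := MeasureTheory.volume) 0 1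
  have i2 := c2.intervalIntegrable (μ := MeasureTheory.volume) 0 1
  -- Step A
  have hdA : ∀ x ∈ Set.uIcc (0:ℝ) 1, HasDerivAt (fun y : ℝ => y^(n+1)*(1-y)^(n+1)*(B-2*Gfun n y))
      (((n:ℝ)+1)*((1-2*x)*(x^n*(1-x)^n)*(B-2*Gfun n x)) - 2*(x^(2*n+1)*(1-x)^(2*n+1))) x := by
    intro x _
    have h1 : HasDerivAt (fun y : ℝ => y^(n+1)) (((n:ℝ)+1)*x^n) x := by
      simpa using hasDerivAt_pow (n+1) x
    have h2 : HasDerivAt (fun y : ℝ => (1-y)^(n+1)) (-(((n:ℝ)+1)*(1-x)^n)) x := by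
      have hs : HasDerivAt (fun y : ℝ => 1-y) (-1) x := (hasDerivAt_id x).const_sub 1
      simpa [Function.comp_def] using (hasDerivAt_pow (n+1) (1-x)).comp x hs
    have h3 : HasDerivAt (fun y : ℝ => B - 2*Gfun n y) (-(2*(x^n*(1-x)^n))) x :=
      ((Gderiv n x).const_mul 2).const_sub B
    have := (h1.mul h2).mul h3
    exact this.congr_deriv (by simp only [Pi.mul_apply]; ring)
  have hA := integral_eq_sub_of_hasDerivAt hdA ((i1.const_mul _).sub (i2.const_mul _))
  have hA0 : (fun y : ℝ => y^(n+1)*(1-y)^(n+1)*(B-2*Gfun n y)) 1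
      - (fun y : ℝ => y^(n+1)*(1-y)^(n+1)*(B-2*Gfun n y)) 0 = 0 := by
    simp [Gzero, zero_pow (Nat.succ_ne_zero n)]
  rw [hA0, integral_sub (i1.const_mul _) (i2.const_mul _), integral_const_mul,
    integral_const_mul] at hA
  have hbeta : ∫ x in (0:ℝ)..1, x^(2*n+1)*(1-x)^(2*n+1)
      = ((2*n+1).factorial : ℝ)^2 / ((4*n+3).factorial : ℝ) := by
    have := beta_nat (2*n+1) (2*n+1)
    rw [show 2*n+1+(2*n+1)+1 = 4*n+3 by ring] at this
    rw [this]; ring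
  rw [hbeta] at hA
  -- Step C
  have cV : Continuous (fun x : ℝ => Gfun n x * (B - Gfun n x)) :=
    cG.mul (continuous_const.sub cG)
  have iV := cV.intervalIntegrable (μ := MeasureTheory.volume) 0 1
  have hdC : ∀ x ∈ Set.uIcc (0:ℝ) 1, HasDerivAt (fun y : ℝ => (1-2*y)*(Gfun n y*(B-Gfun n y)))
      (-2*(Gfun n x*(B-Gfun n x)) + (1-2*x)*(x^n*(1-x)^n)*(B-2*Gfun n x)) x := by
    intro x _
    have hlin : HasDerivAt (fun y : ℝ => 1-2*y) (-2) x := by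
      simpa using ((hasDerivAt_id x).const_mul 2).const_sub 1
    have hV : HasDerivAt (fun y : ℝ => Gfun n y*(B-Gfun n y))
        ((x^n*(1-x)^n)*(B-Gfun n x) + Gfun n x*(-(x^n*(1-x)^n))) x :=
      (Gderiv n x).mul ((Gderiv n x).const_sub B)
    have := hlin.mul hV
    exact this.congr_deriv (by ring)
  have hC := integral_eq_sub_of_hasDerivAt hdC ((iV.const_mul _).add i1)
  have hC0 : (fun y : ℝ => (1-2*y)*(Gfun n y*(B-Gfun n y))) 1
      - (fun y : ℝ => (1-2*y)*(Gfun n y*(B-Gfun n y))) 0 = 0 := by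
    simp [Gzero, hB]
  rw [hC0, integral_add (iV.const_mul _) i1, integral_const_mul] at hC
  -- combine
  have hn1 : ((n:ℝ)+1) ≠ 0 := by positivity
  have hf : ((4*n+3).factorial : ℝ) ≠ 0 := Nat.cast_ne_zero.mpr (Nat.factorial_pos _).ne'
  set S := ∫ x in (0:ℝ)..1, (1-2*x)*(x^n*(1-x)^n)*(B-2*Gfun n x) with hSdef
  have h1 : ((n:ℝ)+1) * S = 2 * (((2*n+1).factorial : ℝ)^2 / ((4*n+3).factorial : ℝ)) := by
    linarith [hA]
  have h2 : ((n:ℝ)+1) * S * ((4*n+3).factorial : ℝ) = 2 * ((2*n+1).factorial : ℝ)^2 := by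
    rw [h1]; field_simp
  rw [eq_div_iff (mul_ne_zero hn1 hf)]
  linear_combination (1/2) * h2 - (((n:ℝ)+1)*((4*n+3).factorial:ℝ)/2) * hC

lemma intG2 (n : ℕ) : ∫ x in (0:ℝ)..1, (Gfun n x)^2
    = (Gfun n 1)^2/2 - ((2*n+1).factorial : ℝ)^2 / (((n:ℝ)+1) * ((4*n+3).factorial : ℝ)) := by
  have iV : IntervalIntegrable (fun x : ℝ => Gfun n x * (Gfun n 1 - Gfun n x))
      MeasureTheory.volume 0 1 :=
    ((Gcont n).mul (continuous_const.sub (Gcont n))).intervalIntegrable 0 1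
  have iG : IntervalIntegrable (fun x : ℝ => Gfun n 1 * Gfun n x) MeasureTheory.volume 0 1 :=
    (continuous_const.mul (Gcont n)).intervalIntegrable 0 1
  have hsplit : ∫ x in (0:ℝ)..1, (Gfun n x)^2
      = (∫ x in (0:ℝ)..1, Gfun n 1 * Gfun n x)
        - ∫ x in (0:ℝ)..1, Gfun n x * (Gfun n 1 - Gfun n x) := by
    rw [← integral_sub iG iV]
    apply integral_congr
    intro x _
    ring
  rw [hsplit, integral_const_mul, intG, Kval]
  ring

/-- The real Beta function `B(a,b) = ∫₀¹ t^{a−1}(1−t)^{b−1} dt`. -/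
noncomputable def realBeta (a b : ℝ) : ℝ :=
  ∫ t in (0:ℝ)..1, t ^ (a - 1) * (1 - t) ^ (b - 1)

/-- The regularised incomplete Beta function `I(a,b;x)`. -/
noncomputable def regIncBeta (a b x : ℝ) : ℝ :=
  (∫ t in (0:ℝ)..x, t ^ (a - 1) * (1 - t) ^ (b - 1)) / realBeta a b

/-- Closed forms: `∫₀¹ I(m,m;x)² dx = 1/2 − (2m)!⁴/(4(4m)! m!⁴)` and
`∫₀¹ (d/dx I(m,m;x))² dx = (2m−2)!²(2m−1)!²/((4m−3)!(m−1)!⁴)`. -/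
theorem stmt14 (m : ℕ) (hm : 1 ≤ m) :
    (∫ x in (0:ℝ)..1, (regIncBeta m m x)^2
      = 1/2 - ((2*m).factorial : ℝ)^4 / (4 * ((4*m).factorial : ℝ) * ((m.factorial : ℝ))^4)) ∧
    (∫ x in (0:ℝ)..1, (deriv (regIncBeta m m) x)^2
      = (((2*m - 2).factorial : ℝ))^2 * (((2*m - 1).factorial : ℝ))^2 /
        (((4*m - 3).factorial : ℝ) * (((m - 1).factorial : ℝ))^4)) := by
  obtain ⟨n, rfl⟩ : ∃ n, m = n + 1 := ⟨m - 1, by omega⟩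
  have hc : (((n+1 : ℕ) : ℝ)) - 1 = ((n : ℕ) : ℝ) := by push_cast; ring
  have hreg : regIncBeta ((n+1 : ℕ) : ℝ) ((n+1 : ℕ) : ℝ) = fun x => Gfun n x / Gfun n 1 := by
    funext x
    unfold regIncBeta realBeta Gfun
    simp only [hc, Real.rpow_natCast]
  have hN : ((n.factorial : ℝ)) ≠ 0 := Nat.cast_ne_zero.mpr n.factorial_pos.ne'
  have hF2 : (((2*n+1).factorial : ℝ)) ≠ 0 := Nat.cast_ne_zero.mpr (Nat.factorial_pos _).ne'
  have hF4 : (((4*n+3).factorial : ℝ)) ≠ 0 := Nat.cast_ne_zero.mpr (Nat.factorial_pos _).ne'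
  have hF41 : (((4*n+1).factorial : ℝ)) ≠ 0 := Nat.cast_ne_zero.mpr (Nat.factorial_pos _).ne'
  have hn1 : ((n:ℝ)+1) ≠ 0 := by positivity
  have hBne : Gfun n 1 ≠ 0 := by
    rw [G1val]
    positivity
  constructor
  · simp only [hreg]
    have e1 : (fun x : ℝ => (Gfun n x / Gfun n 1)^2)
        = fun x : ℝ => (Gfun n x)^2 * ((Gfun n 1)^2)⁻¹ := by
      funext x; ring
    rw [e1, integral_mul_const, intG2, G1val]
    rw [show 2*(n+1) = (2*n+1)+1 by ring, show 4*(n+1) = (4*n+3)+1 by ring,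
      Nat.factorial_succ (2*n+1), Nat.factorial_succ (4*n+3), Nat.factorial_succ n]
    push_cast
    field_simp
    ring
  · simp only [hreg]
    have hder : ∀ x : ℝ, deriv (fun y => Gfun n y / Gfun n 1) x
        = (x^n*(1-x)^n) / Gfun n 1 := fun x => ((Gderiv n x).div_const _).deriv
    simp only [hder]
    have e1 : (fun x : ℝ => ((x^n*(1-x)^n) / Gfun n 1)^2)
        = fun x : ℝ => (x^(2*n)*(1-x)^(2*n)) * ((Gfun n 1)^2)⁻¹ := by
      funext x; ring
    rw [e1, integral_mul_const]
    have hbeta : ∫ x in (0:ℝ)..1, x^(2*n)*(1-x)^(2*n)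
        = ((2*n).factorial : ℝ)^2 / ((4*n+1).factorial : ℝ) := by
      have := beta_nat (2*n) (2*n)
      rw [show 2*n+(2*n)+1 = 4*n+1 by ring] at this
      rw [this]; ring
    rw [hbeta, G1val]
    rw [show 2*(n+1)-2 = 2*n by omega, show 2*(n+1)-1 = 2*n+1 by omega,
      show 4*(n+1)-3 = 4*n+1 by omega, show n+1-1 = n by omega]
    rw [div_pow, inv_div, div_mul_div_comm, div_eq_div_iff (by positivity) (by positivity)]
    ring
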